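/- Let m ≥ 2 and k ≥ 2 be integers and let B(m,k) be the generalized butterfly graph with n = m^k vertices per strip. Let F be any set of edges of the transitive closure TC(B(m,k)) such that in the digraph B(m,k) ∪ F, every vertex u of strip 1 has a directed path of length at most k−1 to every vertex v of strip k+1. Then F contains at least m^{k+2} = n^{1+2/k} edges that are not edges of B(m,k). -/

import Mathlib

/-- The generalized butterfly digraph `B(m,k)`: vertices are `{1,…,m}^k × {1,…,k+1}`
(strips are `0`-indexed here, so strip `i` of the paper corresponds to second coordinate
`i - 1`), with an edge from `(u,t)` to `(v,t+1)` iff `u` and `v` agree on every coordinate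
other than coordinate `t`. -/
def bfly (m k : ℕ) (x y : (Fin k → Fin m) × Fin (k + 1)) : Prop :=
  (y.2 : ℕ) = (x.2 : ℕ) + 1 ∧ ∀ j : Fin k, (j : ℕ) ≠ (x.2 : ℕ) → x.1 j = y.1 j

/-- There is a directed walk of length at most `k` from `u` to `v` in the digraph
with edge relation `E`. -/
def distLE {V : Type*} (E : V → V → Prop) : ℕ → V → V → Prop
  | 0 => fun u v => u = v
  | n + 1 => fun u v => u = v ∨ ∃ w, E u w ∧ distLE E n w v

section Aux

variable {m k : ℕ}

/-- Structure of transitive-closure edges of the butterfly: the strip strictly increases,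
and coordinates outside the strip interval are unchanged. -/
lemma transGen_bfly_spec {x y : (Fin k → Fin m) × Fin (k + 1)}
    (h : Relation.TransGen (bfly m k) x y) :
    (x.2 : ℕ) < (y.2 : ℕ) ∧
      ∀ j : Fin k, ((j : ℕ) < (x.2 : ℕ) ∨ (y.2 : ℕ) ≤ (j : ℕ)) → x.1 j = y.1 j := by
  induction h with
  | single h =>
    obtain ⟨h1, h2⟩ := h
    exact ⟨by omega, fun j hj => h2 j (by omega)⟩
  | @tail b c hxb hbc ih =>
    obtain ⟨h1, h2⟩ := hbc
    obtain ⟨ih1, ih2⟩ := ih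
    refine ⟨by omega, fun j hj => ?_⟩
    have e1 : x.1 j = b.1 j := ih2 j (by omega)
    have e2 : b.1 j = c.1 j := h2 j (by omega)
    rw [e1, e2]

variable {F : Set (((Fin k → Fin m) × Fin (k + 1)) × ((Fin k → Fin m) × Fin (k + 1)))}

/-- Structure of any edge of the butterfly augmented with transitive-closure edges `F`. -/
lemma edge_spec (hF : ∀ e ∈ F, e.1 ≠ e.2 ∧ Relation.TransGen (bfly m k) e.1 e.2)
    {u w : (Fin k → Fin m) × Fin (k + 1)} (h : bfly m k u w ∨ (u, w) ∈ F) :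
    (u.2 : ℕ) < (w.2 : ℕ) ∧
      (∀ j : Fin k, ((j : ℕ) < (u.2 : ℕ) ∨ (w.2 : ℕ) ≤ (j : ℕ)) → u.1 j = w.1 j) ∧
      ((u.2 : ℕ) + 2 ≤ (w.2 : ℕ) → (u, w) ∈ F ∧ ¬ bfly m k u w) := by
  rcases h with h | h
  · obtain ⟨h1, h2⟩ := h
    exact ⟨by omega, fun j hj => h2 j (by omega), fun hj => by omega⟩
  · have := transGen_bfly_spec (hF _ h).2
    refine ⟨this.1, this.2, fun hj => ⟨h, fun hb => ?_⟩⟩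
    have := hb.1
    omega

/-- Any walk in the augmented graph only increases the strip and preserves coordinates
outside the strip interval. -/
lemma walk_spec (hF : ∀ e ∈ F, e.1 ≠ e.2 ∧ Relation.TransGen (bfly m k) e.1 e.2) :
    ∀ (n : ℕ) (u v : (Fin k → Fin m) × Fin (k + 1)),
      distLE (fun a b => bfly m k a b ∨ (a, b) ∈ F) n u v →
      (u.2 : ℕ) ≤ (v.2 : ℕ) ∧
        ∀ j : Fin k, ((j : ℕ) < (u.2 : ℕ) ∨ (v.2 : ℕ) ≤ (j : ℕ)) → u.1 j = v.1 j := by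
  intro n
  induction n with
  | zero => intro u v h; cases h; exact ⟨le_rfl, fun j _ => rfl⟩
  | succ n ih =>
    intro u v h
    rcases h with rfl | ⟨w, hew, hwalk⟩
    · exact ⟨le_rfl, fun j _ => rfl⟩
    · obtain ⟨h1, h2, _⟩ := edge_spec hF hew
      obtain ⟨ih1, ih2⟩ := ih w v hwalk
      refine ⟨by omega, fun j hj => ?_⟩
      have e1 : u.1 j = w.1 j := h2 j (by omega)
      have e2 : w.1 j = v.1 j := ih2 j (by omega)
      rw [e1, e2]

/-- If a walk gains more strips than its length, it must contain a non-butterfly `F`-edge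
jumping at least two strips, which agrees with the start vertex below its source strip and
with the end vertex above its target strip. -/
lemma extract (hF : ∀ e ∈ F, e.1 ≠ e.2 ∧ Relation.TransGen (bfly m k) e.1 e.2) :
    ∀ (n : ℕ) (u v : (Fin k → Fin m) × Fin (k + 1)),
      distLE (fun a b => bfly m k a b ∨ (a, b) ∈ F) n u v →
      (u.2 : ℕ) + n < (v.2 : ℕ) →
      ∃ e ∈ F, ¬ bfly m k e.1 e.2 ∧ (e.1.2 : ℕ) + 2 ≤ (e.2.2 : ℕ) ∧
        (u.2 : ℕ) ≤ (e.1.2 : ℕ) ∧ (e.2.2 : ℕ) ≤ (v.2 : ℕ) ∧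
        (∀ j : Fin k, ((j : ℕ) < (u.2 : ℕ) ∨ (e.1.2 : ℕ) ≤ (j : ℕ)) → u.1 j = e.1.1 j) ∧
        (∀ j : Fin k, ((j : ℕ) < (e.2.2 : ℕ) ∨ (v.2 : ℕ) ≤ (j : ℕ)) → e.2.1 j = v.1 j) := by
  intro n
  induction n with
  | zero => intro u v h hlt; cases h; omega
  | succ n ih =>
    intro u v h hlt
    rcases h with rfl | ⟨w, hew, hwalk⟩
    · omega
    · obtain ⟨h1, h2, h3⟩ := edge_spec hF hew
      by_cases hjump : (u.2 : ℕ) + 2 ≤ (w.2 : ℕ)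
      · obtain ⟨hmem, hnb⟩ := h3 hjump
        obtain ⟨hw1, hw2⟩ := walk_spec hF n w v hwalk
        exact ⟨(u, w), hmem, hnb, hjump, le_rfl, hw1,
          fun j _ => rfl, fun j hj => hw2 j hj⟩
      · have hw2 : (w.2 : ℕ) = (u.2 : ℕ) + 1 := by omega
        obtain ⟨e, hmem, hnb, hj, hle1, hle2, ha1, ha2⟩ := ih w v hwalk (by omega)
        refine ⟨e, hmem, hnb, hj, by omega, hle2, fun j hjc => ?_, ha2⟩
        have e1 : u.1 j = w.1 j := h2 j (by omega)
        have e2 : w.1 j = e.1.1 j := ha1 j (by omega)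
        rw [e1, e2]

end Aux

/-- If adding a set `F` of transitive-closure edges to the generalized butterfly `B(m,k)`
brings every strip-1 vertex within distance `k-1` of every strip-`(k+1)` vertex, then `F`
contains at least `m^(k+2) = n^(1+2/k)` edges that are not butterfly edges. -/
theorem stmt7 (m k : ℕ) (hm : 2 ≤ m) (hk : 2 ≤ k)
    (F : Set (((Fin k → Fin m) × Fin (k + 1)) × ((Fin k → Fin m) × Fin (k + 1))))
    (hF : ∀ e ∈ F, e.1 ≠ e.2 ∧ Relation.TransGen (bfly m k) e.1 e.2)
    (hreach : ∀ u v : (Fin k → Fin m) × Fin (k + 1), (u.2 : ℕ) = 0 → (v.2 : ℕ) = k →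
      distLE (fun a b => bfly m k a b ∨ (a, b) ∈ F) (k - 1) u v) :
    m ^ (k + 2) ≤ ({e ∈ F | ¬ bfly m k e.1 e.2}).ncard := by
  classical
  -- For every source/target pair there is a non-butterfly `F`-edge serving it.
  have key : ∀ p : (Fin k → Fin m) × (Fin k → Fin m),
      ∃ e, (e ∈ F ∧ ¬ bfly m k e.1 e.2) ∧ (e.1.2 : ℕ) + 2 ≤ (e.2.2 : ℕ) ∧
        (∀ j : Fin k, (e.1.2 : ℕ) ≤ (j : ℕ) → p.1 j = e.1.1 j) ∧
        (∀ j : Fin k, (j : ℕ) < (e.2.2 : ℕ) → e.2.1 j = p.2 j) := by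
    intro p
    have hr := hreach (p.1, ⟨0, by omega⟩) (p.2, ⟨k, by omega⟩) rfl rfl
    have hlt : (((p.1, (⟨0, by omega⟩ : Fin (k + 1))).2 : ℕ)) + (k - 1)
        < ((p.2, (⟨k, by omega⟩ : Fin (k + 1))).2 : ℕ) := by
      simp only []
      omega
    obtain ⟨e, hmem, hnb, hj, _, hle2, ha1, ha2⟩ := extract hF (k - 1) _ _ hr hlt
    refine ⟨e, ⟨hmem, hnb⟩, hj, fun j hj' => ha1 j (Or.inr hj'), fun j hj' => ?_⟩
    exact ha2 j (Or.inl hj')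
  choose f hfS hfjump hf1 hf2 using key
  have hfin : ({e ∈ F | ¬ bfly m k e.1 e.2}).Finite := Set.toFinite _
  rw [Set.ncard_eq_toFinset_card _ hfin]
  set T := hfin.toFinset with hT
  -- fiber bound
  have hfiber : ∀ e ∈ (Finset.univ : Finset ((Fin k → Fin m) × (Fin k → Fin m))).image f,
      ({p ∈ (Finset.univ : Finset ((Fin k → Fin m) × (Fin k → Fin m))) | f p = e}).card
        ≤ m ^ (k - 2) := by
    intro e he
    obtain ⟨p0, _, hp0⟩ := Finset.mem_image.mp he
    have hjump : (e.1.2 : ℕ) + 2 ≤ (e.2.2 : ℕ) := hp0 ▸ hfjump p0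
    have hik : (e.1.2 : ℕ) ≤ k := by omega
    have hjk : (e.2.2 : ℕ) ≤ k := by
      have := e.2.2.isLt; omega
    set i := (e.1.2 : ℕ)
    set j := (e.2.2 : ℕ)
    have hcalc : ({p ∈ (Finset.univ : Finset ((Fin k → Fin m) × (Fin k → Fin m))) |
        f p = e}).card ≤ Fintype.card ((Fin i → Fin m) × (Fin (k - j) → Fin m)) := by
      rw [← Finset.card_univ]
      refine Finset.card_le_card_of_injOn
        (fun p => (fun x : Fin i => p.1 ⟨(x : ℕ), by omega⟩,
                   fun x : Fin (k - j) => p.2 ⟨j + (x : ℕ), by omega⟩))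
        (fun _ _ => Finset.mem_univ _) ?_
      intro p hp q hq hpq
      simp only [Finset.coe_filter, Set.mem_setOf_eq] at hp hq
      have hpe : f p = e := hp.2
      have hqe : f q = e := hq.2
      have h1 := congrArg Prod.fst hpq
      have h2 := congrArg Prod.snd hpq
      simp only at h1 h2
      refine Prod.ext ?_ ?_
      · funext x
        by_cases hx : (x : ℕ) < i
        · have := congrFun h1 ⟨(x : ℕ), hx⟩
          simpa using this
        · have e1 : p.1 x = e.1.1 x := by
            have := hf1 p x; rw [hpe] at this; exact this (by omega)
          have e2 : q.1 x = e.1.1 x := by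
            have := hf1 q x; rw [hqe] at this; exact this (by omega)
          rw [e1, e2]
      · funext x
        by_cases hx : (x : ℕ) < j
        · have e1 : e.2.1 x = p.2 x := by
            have := hf2 p x; rw [hpe] at this; exact this hx
          have e2 : e.2.1 x = q.2 x := by
            have := hf2 q x; rw [hqe] at this; exact this hx
          rw [← e1, ← e2]
        · have hxk : (x : ℕ) - j < k - j := by
            have := x.isLt; omega
          have := congrFun h2 ⟨(x : ℕ) - j, hxk⟩
          simp only at this
          have hfix : (⟨j + ((x : ℕ) - j), by omega⟩ : Fin k) = x := by
            apply Fin.ext; simp; omega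
          rwa [hfix] at this
    have hcard : Fintype.card ((Fin i → Fin m) × (Fin (k - j) → Fin m)) ≤ m ^ (k - 2) := by
      rw [Fintype.card_prod, Fintype.card_fun, Fintype.card_fun]
      simp only [Fintype.card_fin]
      rw [← pow_add]
      exact Nat.pow_le_pow_right (by omega) (by omega)
    exact le_trans hcalc hcard
  have hmain := Finset.card_le_mul_card_image (Finset.univ :
      Finset ((Fin k → Fin m) × (Fin k → Fin m))) (m ^ (k - 2)) hfiber
  have himg : (Finset.univ : Finset ((Fin k → Fin m) × (Fin k → Fin m))).image f ⊆ T := by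
    intro e he
    obtain ⟨p, _, hp⟩ := Finset.mem_image.mp he
    rw [hT, Set.Finite.mem_toFinset]
    exact hp ▸ hfS p
  have hTcard := Finset.card_le_card himg
  have huniv : (Finset.univ : Finset ((Fin k → Fin m) × (Fin k → Fin m))).card
      = m ^ k * m ^ k := by
    rw [Finset.card_univ, Fintype.card_prod, Fintype.card_fun, Fintype.card_fin,
      Fintype.card_fin]
  have hfinal : m ^ (k - 2) * m ^ (k + 2) ≤ m ^ (k - 2) * T.card := by
    calc m ^ (k - 2) * m ^ (k + 2) = m ^ k * m ^ k := by
          rw [← pow_add, ← pow_add]; congr 1; omega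
      _ ≤ m ^ (k - 2) * ((Finset.univ : Finset ((Fin k → Fin m) × (Fin k → Fin m))).image
            f).card := huniv ▸ hmain
      _ ≤ m ^ (k - 2) * T.card := Nat.mul_le_mul_left _ hTcard
  exact Nat.le_of_mul_le_mul_left hfinal (Nat.pow_pos (by omega))
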